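/- For every integer c ≥ 3, the extended graph G_{x,y}^{(c)} is c-colorable if and only if x and y are not disjoint, i.e., if and only if there exists a pair (i,j) ∈ {0,…,k−1}² with x[i,j] = y[i,j] = 1. -/
import Mathlib


/-- Vertices of the coloring lower-bound graph.  The side `s : Bool`
distinguishes Alice (`false`, the `a`'s) from Bob (`true`, the `b`'s), and
`ℓ : Bool` distinguishes index `1` (`false`) from index `2` (`true`).
So `node false false i = a_1^i`, `bar s ℓ i = s̄_ℓ^i`, `dbar s ℓ i = s̿_ℓ^i`,
`f s ℓ h = f_S^h`, `t s ℓ h = t_S^h`, `c false m = c_a^m`, `c true m = c_b^m`. -/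
inductive CVertex (k logk : ℕ) where
  | node (s ℓ : Bool) (i : Fin k)
  | bar (s ℓ : Bool) (i : Fin k)
  | dbar (s ℓ : Bool) (i : Fin k)
  | f (s ℓ : Bool) (h : Fin logk)
  | t (s ℓ : Bool) (h : Fin logk)
  | c (s : Bool) (m : Fin 3)
deriving DecidableEq

/-- The index, among `{0,1,2}`, of the `c`-node attached to the bit-nodes of the
sets indexed by `ℓ` (i.e. `1` for `ℓ = 1` and `2` for `ℓ = 2`). -/
def ownIdx (ℓ : Bool) : Fin 3 := if ℓ then 2 else 1

/-- The "other" index: `2` for `ℓ = 1` and `1` for `ℓ = 2`. -/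
def othIdx (ℓ : Bool) : Fin 3 := if ℓ then 1 else 2

/-- Base relation generating the edges (i)–(x) of the coloring lower-bound graph
`G_{x,y}`. -/
def cRel (k logk : ℕ) (x y : Fin k → Fin k → Bool) (u v : CVertex k logk) : Prop :=
  -- (i) each node s_ℓ^i is adjacent to exactly its bit-nodes bin(s_ℓ^i)
  (∃ (s ℓ : Bool) (i : Fin k) (h : Fin logk), u = CVertex.node s ℓ i ∧
    v = if i.val.testBit h.val then CVertex.t s ℓ h else CVertex.f s ℓ h) ∨
  -- (ii) the 4-cycles on the bit-nodes
  (∃ (ℓ : Bool) (h : Fin logk),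
    (u = CVertex.f false ℓ h ∧ v = CVertex.t false ℓ h) ∨
    (u = CVertex.t false ℓ h ∧ v = CVertex.f true ℓ h) ∨
    (u = CVertex.f true ℓ h ∧ v = CVertex.t true ℓ h) ∨
    (u = CVertex.t true ℓ h ∧ v = CVertex.f false ℓ h)) ∨
  -- (iii) the two triangles on the c-nodes, and c_a^m ~ c_b^m' for m ≠ m'
  (∃ (s : Bool) (m m' : Fin 3), m ≠ m' ∧ u = CVertex.c s m ∧ v = CVertex.c s m') ∨
  (∃ (m m' : Fin 3), m ≠ m' ∧ u = CVertex.c false m ∧ v = CVertex.c true m') ∨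
  -- (iv) the path edges (s_ℓ^i, s̄_ℓ^i), (s̄_ℓ^i, s̿_ℓ^i), (s̿_ℓ^i, s̄_ℓ^{i+1})
  (∃ (s ℓ : Bool) (i : Fin k), u = CVertex.node s ℓ i ∧ v = CVertex.bar s ℓ i) ∨
  (∃ (s ℓ : Bool) (i : Fin k), u = CVertex.bar s ℓ i ∧ v = CVertex.dbar s ℓ i) ∨
  (∃ (s ℓ : Bool) (i : Fin k) (hi : i.val + 1 < k),
    u = CVertex.dbar s ℓ i ∧ v = CVertex.bar s ℓ ⟨i.val + 1, hi⟩) ∨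
  -- (v) c_s^ℓ adjacent to every bit-node of the sets indexed by ℓ
  (∃ (s ℓ : Bool) (h : Fin logk), u = CVertex.c s (ownIdx ℓ) ∧
    (v = CVertex.f s ℓ h ∨ v = CVertex.t s ℓ h)) ∨
  -- (vi)–(ix) c_s^{oth ℓ} ~ s_ℓ^i, c_s^{own ℓ} ~ s̿_ℓ^i,
  --           c_s^{oth ℓ} ~ s̄_ℓ^0 and c_s^{oth ℓ} ~ s̿_ℓ^{k−1}
  (∃ (s ℓ : Bool) (i : Fin k), u = CVertex.c s (othIdx ℓ) ∧ v = CVertex.node s ℓ i) ∨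
  (∃ (s ℓ : Bool) (i : Fin k), u = CVertex.c s (ownIdx ℓ) ∧ v = CVertex.dbar s ℓ i) ∨
  (∃ (s ℓ : Bool) (i : Fin k), i.val = 0 ∧
    u = CVertex.c s (othIdx ℓ) ∧ v = CVertex.bar s ℓ i) ∨
  (∃ (s ℓ : Bool) (i : Fin k), i.val = k - 1 ∧
    u = CVertex.c s (othIdx ℓ) ∧ v = CVertex.dbar s ℓ i) ∨
  -- (x) the input edges
  (∃ i j : Fin k, x i j = false ∧
    u = CVertex.node false false i ∧ v = CVertex.node false true j) ∨
  (∃ i j : Fin k, y i j = false ∧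
    u = CVertex.node true false i ∧ v = CVertex.node true true j)

/-- The coloring lower-bound graph `G_{x,y}`. -/
def cGraph (k logk : ℕ) (x y : Fin k → Fin k → Bool) : SimpleGraph (CVertex k logk) :=
  SimpleGraph.fromRel (cRel k logk x y)

/-- The side of a vertex of the coloring lower-bound graph: `false` for Alice's
side `V_A` (the `a`-vertices and `c_a`-vertices), `true` for Bob's side `V_B`. -/
def side {k logk : ℕ} : CVertex k logk → Bool
  | .node s _ _ => s
  | .bar s _ _ => s
  | .dbar s _ _ => s
  | .f s _ _ => s
  | .t s _ _ => s
  | .c s _ => s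

/-- Vertices of the extended graph `G_{x,y}^{(c)}`: the vertices of `G_{x,y}`
together with the extra nodes `c_a^3, …, c_a^{c−1}` (encoded `Sum.inr (false, m)`)
and `c_b^3, …, c_b^{c−1}` (encoded `Sum.inr (true, m)`), `m : Fin (c − 3)`. -/
abbrev ECVertex (k logk c : ℕ) := CVertex k logk ⊕ (Bool × Fin (c - 3))

/-- Base relation generating the edges of the extended graph `G_{x,y}^{(c)}`:
the edges of `G_{x,y}`; each extra node `c_a^m` joined to every node of `V_A`
and to the other extra `c_a`-nodes; each extra node `c_b^m` joined to every node
of `V_B`, to the other extra `c_b`-nodes, and to `c_a^0, c_a^1, c_a^2`. -/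
def ecRel (k logk c : ℕ) (x y : Fin k → Fin k → Bool) :
    ECVertex k logk c → ECVertex k logk c → Prop
  | Sum.inl u, Sum.inl v => cRel k logk x y u v
  | Sum.inr (s, _), Sum.inl v =>
      side v = s ∨ (s = true ∧ ∃ m' : Fin 3, v = CVertex.c false m')
  | Sum.inl _, Sum.inr _ => False
  | Sum.inr (s, m), Sum.inr (s', m') => s = s' ∧ m ≠ m'

/-- The extended graph `G_{x,y}^{(c)}`. -/
def ecGraph (k logk c : ℕ) (x y : Fin k → Fin k → Bool) :
    SimpleGraph (ECVertex k logk c) :=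
  SimpleGraph.fromRel (ecRel k logk c x y)

/-! ### Auxiliary machinery for the proof -/

namespace CLB

variable {k logk : ℕ} {x y : Fin k → Fin k → Bool}

/-- Natural-number versions of `ownIdx`/`othIdx`. -/
def oI (ℓ : Bool) : ℕ := if ℓ then 2 else 1
def oT (ℓ : Bool) : ℕ := if ℓ then 1 else 2

lemma ownIdx_val (ℓ : Bool) : (ownIdx ℓ).val = oI ℓ := by cases ℓ <;> rfl
lemma othIdx_val (ℓ : Bool) : (othIdx ℓ).val = oT ℓ := by cases ℓ <;> rfl

/- Constructors for the individual disjuncts of `cRel`. -/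

lemma rel_bin_t {s ℓ : Bool} {i : Fin k} {h : Fin logk}
    (hb : i.val.testBit h.val = true) :
    cRel k logk x y (.node s ℓ i) (.t s ℓ h) :=
  Or.inl ⟨s, ℓ, i, h, rfl, by rw [hb]; simp⟩

lemma rel_bin_f {s ℓ : Bool} {i : Fin k} {h : Fin logk}
    (hb : i.val.testBit h.val = false) :
    cRel k logk x y (.node s ℓ i) (.f s ℓ h) :=
  Or.inl ⟨s, ℓ, i, h, rfl, by rw [hb]; simp⟩

lemma rel_ft (s ℓ : Bool) (h : Fin logk) :
    cRel k logk x y (.f s ℓ h) (.t s ℓ h) := by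
  cases s
  · exact Or.inr (Or.inl ⟨ℓ, h, Or.inl ⟨rfl, rfl⟩⟩)
  · exact Or.inr (Or.inl ⟨ℓ, h, Or.inr (Or.inr (Or.inl ⟨rfl, rfl⟩))⟩)

lemma rel_tf1 (ℓ : Bool) (h : Fin logk) :
    cRel k logk x y (.t false ℓ h) (.f true ℓ h) :=
  Or.inr (Or.inl ⟨ℓ, h, Or.inr (Or.inl ⟨rfl, rfl⟩)⟩)

lemma rel_tf2 (ℓ : Bool) (h : Fin logk) :
    cRel k logk x y (.t true ℓ h) (.f false ℓ h) :=
  Or.inr (Or.inl ⟨ℓ, h, Or.inr (Or.inr (Or.inr ⟨rfl, rfl⟩))⟩)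

lemma rel_cc (s : Bool) {m m' : Fin 3} (hmm : m ≠ m') :
    cRel k logk x y (.c s m) (.c s m') :=
  Or.inr (Or.inr (Or.inl ⟨s, m, m', hmm, rfl, rfl⟩))

lemma rel_cx {m m' : Fin 3} (hmm : m ≠ m') :
    cRel k logk x y (.c false m) (.c true m') :=
  Or.inr (Or.inr (Or.inr (Or.inl ⟨m, m', hmm, rfl, rfl⟩)))

lemma rel_nb (s ℓ : Bool) (i : Fin k) :
    cRel k logk x y (.node s ℓ i) (.bar s ℓ i) :=
  Or.inr (Or.inr (Or.inr (Or.inr (Or.inl ⟨s, ℓ, i, rfl, rfl⟩))))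

lemma rel_bd (s ℓ : Bool) (i : Fin k) :
    cRel k logk x y (.bar s ℓ i) (.dbar s ℓ i) :=
  Or.inr (Or.inr (Or.inr (Or.inr (Or.inr (Or.inl ⟨s, ℓ, i, rfl, rfl⟩)))))

lemma rel_db (s ℓ : Bool) (i : Fin k) (hi : i.val + 1 < k) :
    cRel k logk x y (.dbar s ℓ i) (.bar s ℓ ⟨i.val + 1, hi⟩) :=
  Or.inr (Or.inr (Or.inr (Or.inr (Or.inr (Or.inr (Or.inl ⟨s, ℓ, i, hi, rfl, rfl⟩))))))

lemma rel_of (s ℓ : Bool) (h : Fin logk) :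
    cRel k logk x y (.c s (ownIdx ℓ)) (.f s ℓ h) :=
  Or.inr (Or.inr (Or.inr (Or.inr (Or.inr (Or.inr (Or.inr (Or.inl
    ⟨s, ℓ, h, rfl, Or.inl rfl⟩)))))))

lemma rel_ot (s ℓ : Bool) (h : Fin logk) :
    cRel k logk x y (.c s (ownIdx ℓ)) (.t s ℓ h) :=
  Or.inr (Or.inr (Or.inr (Or.inr (Or.inr (Or.inr (Or.inr (Or.inl
    ⟨s, ℓ, h, rfl, Or.inr rfl⟩)))))))

lemma rel_on (s ℓ : Bool) (i : Fin k) :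
    cRel k logk x y (.c s (othIdx ℓ)) (.node s ℓ i) :=
  Or.inr (Or.inr (Or.inr (Or.inr (Or.inr (Or.inr (Or.inr (Or.inr (Or.inl
    ⟨s, ℓ, i, rfl, rfl⟩))))))))

lemma rel_od (s ℓ : Bool) (i : Fin k) :
    cRel k logk x y (.c s (ownIdx ℓ)) (.dbar s ℓ i) :=
  Or.inr (Or.inr (Or.inr (Or.inr (Or.inr (Or.inr (Or.inr (Or.inr (Or.inr (Or.inl
    ⟨s, ℓ, i, rfl, rfl⟩)))))))))

lemma rel_ob0 (s ℓ : Bool) (i : Fin k) (h0 : i.val = 0) :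
    cRel k logk x y (.c s (othIdx ℓ)) (.bar s ℓ i) :=
  Or.inr (Or.inr (Or.inr (Or.inr (Or.inr (Or.inr (Or.inr (Or.inr (Or.inr (Or.inr (Or.inl
    ⟨s, ℓ, i, h0, rfl, rfl⟩))))))))))

lemma rel_odl (s ℓ : Bool) (i : Fin k) (hl : i.val = k - 1) :
    cRel k logk x y (.c s (othIdx ℓ)) (.dbar s ℓ i) :=
  Or.inr (Or.inr (Or.inr (Or.inr (Or.inr (Or.inr (Or.inr (Or.inr (Or.inr (Or.inr (Or.inr (Or.inl
    ⟨s, ℓ, i, hl, rfl, rfl⟩)))))))))))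

lemma rel_x {i j : Fin k} (hx : x i j = false) :
    cRel k logk x y (.node false false i) (.node false true j) :=
  Or.inr (Or.inr (Or.inr (Or.inr (Or.inr (Or.inr (Or.inr (Or.inr (Or.inr (Or.inr (Or.inr (Or.inr (Or.inl
    ⟨i, j, hx, rfl, rfl⟩))))))))))))

lemma rel_y {i j : Fin k} (hy : y i j = false) :
    cRel k logk x y (.node true false i) (.node true true j) :=
  Or.inr (Or.inr (Or.inr (Or.inr (Or.inr (Or.inr (Or.inr (Or.inr (Or.inr (Or.inr (Or.inr (Or.inr (Or.inr
    ⟨i, j, hy, rfl, rfl⟩))))))))))))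

end CLB
namespace CLB

/-- The explicit proper coloring used when `x i0 j0 = y i0 j0 = true`. -/
def clr {k logk : ℕ} (i0 j0 : ℕ) : CVertex k logk → ℕ
  | .node _ ℓ i => if ℓ then (if i.val = j0 then 0 else 2)
      else (if i.val = i0 then 0 else 1)
  | .bar _ ℓ i => if ℓ then (if i.val < j0 then 0 else if i.val = j0 then 2 else 1)
      else (if i.val < i0 then 0 else if i.val = i0 then 1 else 2)
  | .dbar _ ℓ i => if ℓ then (if i.val < j0 then 1 else 0)
      else (if i.val < i0 then 2 else 0)
  | .f _ ℓ h => if ℓ then (if j0.testBit h.val then 0 else 1)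
      else (if i0.testBit h.val then 0 else 2)
  | .t _ ℓ h => if ℓ then (if j0.testBit h.val then 1 else 0)
      else (if i0.testBit h.val then 2 else 0)
  | .c _ m => m.val

lemma clr_lt_3 {k logk : ℕ} (i0 j0 : ℕ) (v : CVertex k logk) : clr i0 j0 v < 3 := by
  rcases v with ⟨s, ℓ, i⟩ | ⟨s, ℓ, i⟩ | ⟨s, ℓ, i⟩ | ⟨s, ℓ, h⟩ | ⟨s, ℓ, h⟩ | ⟨s, m⟩ <;>
    simp only [clr] <;> first
      | (exact m.isLt)
      | (cases ℓ <;> simp only [if_true, if_false, Bool.false_eq_true] <;> split_ifs <;> omega)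

lemma clr_proper {k logk : ℕ} {x y : Fin k → Fin k → Bool} (i0 j0 : Fin k)
    (hx : x i0 j0 = true) (hy : y i0 j0 = true) :
    ∀ u v, cRel k logk x y u v → clr i0.val j0.val u ≠ clr i0.val j0.val v := by
  have hi0 : i0.val < k := i0.isLt
  have hj0 : j0.val < k := j0.isLt
  intro u v hrel
  rcases hrel with ⟨s, ℓ, i, h, rfl, rfl⟩ | ⟨ℓ, h, H⟩ | ⟨s, m, m', hmm, rfl, rfl⟩ |
    ⟨m, m', hmm, rfl, rfl⟩ | ⟨s, ℓ, i, rfl, rfl⟩ | ⟨s, ℓ, i, rfl, rfl⟩ |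
    ⟨s, ℓ, i, hi, rfl, rfl⟩ | ⟨s, ℓ, h, rfl, H⟩ | ⟨s, ℓ, i, rfl, rfl⟩ |
    ⟨s, ℓ, i, rfl, rfl⟩ | ⟨s, ℓ, i, h0, rfl, rfl⟩ | ⟨s, ℓ, i, hl, rfl, rfl⟩ |
    ⟨i, j, hxf, rfl, rfl⟩ | ⟨i, j, hyf, rfl, rfl⟩
  · -- (i) node to bit node
    by_cases hb : i.val.testBit h.val = true
    · rw [if_pos hb]
      cases ℓ <;> simp only [clr, if_true, if_false, Bool.false_eq_true] <;>
        split_ifs <;> first | omega | simp_all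
    · rw [if_neg hb]
      rw [Bool.not_eq_true] at hb
      cases ℓ <;> simp only [clr, if_true, if_false, Bool.false_eq_true] <;>
        split_ifs <;> first | omega | simp_all
  · -- (ii) bit 4-cycles
    rcases H with ⟨rfl, rfl⟩ | ⟨rfl, rfl⟩ | ⟨rfl, rfl⟩ | ⟨rfl, rfl⟩ <;> cases ℓ <;>
      simp only [clr, if_true, if_false, Bool.false_eq_true] <;>
      split_ifs <;> simp_all
  · -- (iii) triangle
    simp only [clr]; exact fun e => hmm (Fin.ext e)
  · simp only [clr]; exact fun e => hmm (Fin.ext e)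
  · -- node-bar
    cases ℓ <;> simp only [clr, if_true, if_false, Bool.false_eq_true] <;>
      split_ifs <;> omega
  · -- bar-dbar
    cases ℓ <;> simp only [clr, if_true, if_false, Bool.false_eq_true] <;>
      split_ifs <;> omega
  · -- dbar-bar succ
    cases ℓ <;> simp only [clr, if_true, if_false, Bool.false_eq_true] <;>
      split_ifs <;> omega
  · -- c own to bit nodes
    rcases H with rfl | rfl <;> cases ℓ <;>
      simp only [clr, ownIdx, if_true, if_false, Bool.false_eq_true] <;>
      split_ifs <;> simp <;> omega
  · -- c oth to node
    cases ℓ <;> simp only [clr, othIdx, if_true, if_false, Bool.false_eq_true] <;>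
      split_ifs <;> simp <;> omega
  · -- c own to dbar
    cases ℓ <;> simp only [clr, ownIdx, if_true, if_false, Bool.false_eq_true] <;>
      split_ifs <;> simp <;> omega
  · -- c oth to bar 0
    cases ℓ <;> simp only [clr, othIdx, if_true, if_false, Bool.false_eq_true] <;>
      split_ifs <;> simp <;> omega
  · -- c oth to dbar last
    cases ℓ <;> simp only [clr, othIdx, if_true, if_false, Bool.false_eq_true] <;>
      split_ifs <;> simp <;> omega
  · -- x edge
    simp only [clr, if_false, Bool.false_eq_true, if_true]
    split_ifs with h1 h2 <;> try omega
    exfalso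
    have : i = i0 := Fin.ext h1
    have : j = j0 := Fin.ext h2
    simp_all
  · -- y edge
    simp only [clr, if_false, Bool.false_eq_true, if_true]
    split_ifs with h1 h2 <;> try omega
    exfalso
    have : i = i0 := Fin.ext h1
    have : j = j0 := Fin.ext h2
    simp_all

end CLB
namespace CLB

lemma colorable_of {k logk c : ℕ} {x y : Fin k → Fin k → Bool} (hc : 3 ≤ c)
    (i0 j0 : Fin k) (hx : x i0 j0 = true) (hy : y i0 j0 = true) :
    (ecGraph k logk c x y).Colorable c := by
  rw [SimpleGraph.colorable_iff_exists_bdd_nat_coloring]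
  have key : ∀ u v : ECVertex k logk c, ecRel k logk c x y u v →
      Sum.elim (clr i0.val j0.val) (fun p : Bool × Fin (c-3) => p.2.val + 3) u ≠
      Sum.elim (clr i0.val j0.val) (fun p : Bool × Fin (c-3) => p.2.val + 3) v := by
    rintro (u | ⟨b, m⟩) (v | ⟨b', m'⟩) h
    · exact clr_proper i0 j0 hx hy u v h
    · exact absurd h not_false
    · have := clr_lt_3 i0.val j0.val v
      simp only [Sum.elim_inl, Sum.elim_inr]
      omega
    · obtain ⟨rfl, hmm⟩ := h
      simp only [Sum.elim_inr]
      intro e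
      exact hmm (Fin.ext (by omega))
  refine ⟨⟨Sum.elim (clr i0.val j0.val) (fun p => p.2.val + 3), ?_⟩, ?_⟩
  · intro u v huv
    rw [show (ecGraph k logk c x y) = SimpleGraph.fromRel (ecRel k logk c x y) from rfl,
      SimpleGraph.fromRel_adj] at huv
    obtain ⟨hne, h | h⟩ := huv
    · exact key u v h
    · exact (key v u h).symm
  · rintro (v | ⟨b, m⟩)
    · show Sum.elim (clr (k := k) (logk := logk) i0.val j0.val)
        (fun p : Bool × Fin (c-3) => p.2.val + 3) (Sum.inl v) < c
      have := clr_lt_3 i0.val j0.val v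
      simp only [Sum.elim_inl]
      omega
    · show Sum.elim (clr (k := k) (logk := logk) i0.val j0.val)
        (fun p : Bool × Fin (c-3) => p.2.val + 3) (Sum.inr (b, m)) < c
      have := m.isLt
      simp only [Sum.elim_inr]
      omega

end CLB
namespace CLB

lemma bool_eq_of_iff {b b' : Bool} (h : b = true ↔ b' = true) : b = b' := by
  cases b <;> cases b' <;> simp_all

lemma core {k logk : ℕ} (hk : 2 ≤ k) (hpow : k = 2 ^ logk)
    (x y : Fin k → Fin k → Bool) (col : CVertex k logk → ℕ)
    (hlt : ∀ v, col v < 3)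
    (hadj : ∀ u v, u ≠ v → cRel k logk x y u v → col u ≠ col v)
    (hcm : ∀ (s : Bool) (m : Fin 3), col (.c s m) = m.val) :
    ∃ i j : Fin k, x i j = true ∧ y i j = true := by
  have ho : ∀ ℓ : Bool, (oI ℓ = 1 ∧ oT ℓ = 2) ∨ (oI ℓ = 2 ∧ oT ℓ = 1) := by
    intro ℓ; cases ℓ <;> simp [oI, oT]
  have hown : ∀ (s ℓ : Bool), col (.c s (ownIdx ℓ)) = oI ℓ := by
    intro s ℓ; rw [hcm, ownIdx_val]
  have hoth : ∀ (s ℓ : Bool), col (.c s (othIdx ℓ)) = oT ℓ := by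
    intro s ℓ; rw [hcm, othIdx_val]
  -- basic color constraints
  have hfI : ∀ (s ℓ : Bool) (h : Fin logk), col (.f s ℓ h) ≠ oI ℓ := by
    intro s ℓ h
    have := hadj _ _ (by simp) (rel_of s ℓ h)
    rw [hown] at this; exact this.symm
  have htI : ∀ (s ℓ : Bool) (h : Fin logk), col (.t s ℓ h) ≠ oI ℓ := by
    intro s ℓ h
    have := hadj _ _ (by simp) (rel_ot s ℓ h)
    rw [hown] at this; exact this.symm
  have hnT : ∀ (s ℓ : Bool) (i : Fin k), col (.node s ℓ i) ≠ oT ℓ := by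
    intro s ℓ i
    have := hadj _ _ (by simp) (rel_on s ℓ i)
    rw [hoth] at this; exact this.symm
  have hdI : ∀ (s ℓ : Bool) (i : Fin k), col (.dbar s ℓ i) ≠ oI ℓ := by
    intro s ℓ i
    have := hadj _ _ (by simp) (rel_od s ℓ i)
    rw [hown] at this; exact this.symm
  have hb0 : ∀ (s ℓ : Bool) (i : Fin k), i.val = 0 → col (.bar s ℓ i) ≠ oT ℓ := by
    intro s ℓ i h0
    have := hadj _ _ (by simp) (rel_ob0 s ℓ i h0)
    rw [hoth] at this; exact this.symm
  have hdl : ∀ (s ℓ : Bool) (i : Fin k), i.val = k - 1 → col (.dbar s ℓ i) ≠ oT ℓ := by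
    intro s ℓ i h0
    have := hadj _ _ (by simp) (rel_odl s ℓ i h0)
    rw [hoth] at this; exact this.symm
  have hft : ∀ (s ℓ : Bool) (h : Fin logk), col (.f s ℓ h) ≠ col (.t s ℓ h) :=
    fun s ℓ h => hadj _ _ (by simp) (rel_ft s ℓ h)
  have hnb : ∀ (s ℓ : Bool) (i : Fin k), col (.node s ℓ i) ≠ col (.bar s ℓ i) :=
    fun s ℓ i => hadj _ _ (by simp) (rel_nb s ℓ i)
  have hbd : ∀ (s ℓ : Bool) (i : Fin k), col (.bar s ℓ i) ≠ col (.dbar s ℓ i) :=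
    fun s ℓ i => hadj _ _ (by simp) (rel_bd s ℓ i)
  have hdb : ∀ (s ℓ : Bool) (i : Fin k) (hi : i.val + 1 < k),
      col (.dbar s ℓ i) ≠ col (.bar s ℓ ⟨i.val + 1, hi⟩) :=
    fun s ℓ i hi => hadj _ _ (by simp) (rel_db s ℓ i hi)
  -- the bit colors agree across the two sides
  have hfeq : ∀ (ℓ : Bool) (h : Fin logk), col (.f false ℓ h) = col (.f true ℓ h) := by
    intro ℓ h
    have h1 := hfI false ℓ h; have h2 := htI false ℓ h
    have h3 := hfI true ℓ h; have h4 := htI true ℓ h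
    have h5 := hft false ℓ h; have h6 := hft true ℓ h
    have h7 := hadj _ _ (by simp) (rel_tf1 ℓ h)
    have h8 := hadj _ _ (by simp) (rel_tf2 ℓ h)
    have l1 := hlt (.f false ℓ h); have l2 := hlt (.t false ℓ h)
    have l3 := hlt (.f true ℓ h); have l4 := hlt (.t true ℓ h)
    have := ho ℓ
    omega
  -- on each side and each ℓ, some node has color 0
  have hex : ∀ s ℓ : Bool, ∃ i : Fin k, col (.node s ℓ i) = 0 := by
    intro s ℓ
    by_contra hno
    push_neg at hno
    have hbarI : ∀ i : Fin k, col (.bar s ℓ i) ≠ oI ℓ := by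
      intro i
      have h1 := hno i; have h2 := hnT s ℓ i; have h3 := hnb s ℓ i
      have l1 := hlt (.node s ℓ i)
      have := ho ℓ
      omega
    have key : ∀ i, ∀ hi : i < k,
        col (.bar s ℓ ⟨i, hi⟩) = 0 ∧ col (.dbar s ℓ ⟨i, hi⟩) = oT ℓ := by
      intro i
      induction i with
      | zero =>
        intro hi
        have h1 := hb0 s ℓ ⟨0, hi⟩ rfl
        have h2 := hbarI ⟨0, hi⟩
        have h3 := hbd s ℓ ⟨0, hi⟩
        have h4 := hdI s ℓ ⟨0, hi⟩
        have l1 := hlt (.bar s ℓ ⟨0, hi⟩); have l2 := hlt (.dbar s ℓ ⟨0, hi⟩)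
        have := ho ℓ
        omega
      | succ n ih =>
        intro hi
        obtain ⟨hbn, hdn⟩ := ih (by omega)
        have h5 : col (.dbar s ℓ ⟨n, by omega⟩) ≠ col (.bar s ℓ ⟨n + 1, hi⟩) :=
          hdb s ℓ ⟨n, by omega⟩ hi
        have h2 := hbarI ⟨n + 1, hi⟩
        have h3 := hbd s ℓ ⟨n + 1, hi⟩
        have h4 := hdI s ℓ ⟨n + 1, hi⟩
        have l1 := hlt (.bar s ℓ ⟨n + 1, hi⟩); have l2 := hlt (.dbar s ℓ ⟨n + 1, hi⟩)
        have := ho ℓ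
        omega
    have h1 := (key (k - 1) (by omega)).2
    have h2 := hdl s ℓ ⟨k - 1, by omega⟩ rfl
    have := ho ℓ
    omega
  -- if a node has color 0 then its bits are determined by the bit-node colors
  have hbits : ∀ (s ℓ : Bool) (i : Fin k), col (.node s ℓ i) = 0 → ∀ h : Fin logk,
      (i.val.testBit h.val = true ↔ col (.f s ℓ h) = 0) := by
    intro s ℓ i h0 h
    have h1 := hfI s ℓ h; have h2 := htI s ℓ h; have h3 := hft s ℓ h
    have l1 := hlt (.f s ℓ h); have l2 := hlt (.t s ℓ h)
    have := ho ℓ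
    by_cases hb : i.val.testBit h.val = true
    · have h4 := hadj _ _ (by simp) (rel_bin_t (s := s) (ℓ := ℓ) (x := x) (y := y) hb)
      rw [h0] at h4
      simp only [hb, true_iff]
      omega
    · rw [Bool.not_eq_true] at hb
      have h4 := hadj _ _ (by simp) (rel_bin_f (s := s) (ℓ := ℓ) (x := x) (y := y) hb)
      rw [h0] at h4
      simp only [hb]
      constructor
      · intro h'; exact absurd h' (by simp)
      · intro h'; omega
  -- color-0 nodes on the two sides have equal indices
  have huniq : ∀ (ℓ : Bool) (i i' : Fin k), col (.node false ℓ i) = 0 →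
      col (.node true ℓ i') = 0 → i = i' := by
    intro ℓ i i' h1 h2
    apply Fin.ext
    apply Nat.eq_of_testBit_eq
    intro h
    by_cases hh : h < logk
    · have b1 := hbits false ℓ i h1 ⟨h, hh⟩
      have b2 := hbits true ℓ i' h2 ⟨h, hh⟩
      have b3 := hfeq ℓ ⟨h, hh⟩
      exact bool_eq_of_iff (by rw [b1, b3, ← b2])
    · have e1 : i.val < 2 ^ logk := by rw [← hpow]; exact i.isLt
      have e2 : i'.val < 2 ^ logk := by rw [← hpow]; exact i'.isLt
      have hik : i.val < 2 ^ h :=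
        lt_of_lt_of_le e1 (Nat.pow_le_pow_right (by norm_num) (by omega))
      have hik' : i'.val < 2 ^ h :=
        lt_of_lt_of_le e2 (Nat.pow_le_pow_right (by norm_num) (by omega))
      rw [Nat.testBit_eq_false_of_lt hik, Nat.testBit_eq_false_of_lt hik']
  obtain ⟨ia, hia⟩ := hex false false
  obtain ⟨ja, hja⟩ := hex false true
  obtain ⟨ib, hib⟩ := hex true false
  obtain ⟨jb, hjb⟩ := hex true true
  obtain rfl : ia = ib := huniq false ia ib hia hib
  obtain rfl : ja = jb := huniq true ja jb hja hjb
  refine ⟨ia, ja, ?_, ?_⟩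
  · by_contra hxf
    rw [Bool.not_eq_true] at hxf
    exact hadj _ _ (by simp) (rel_x hxf) (hia.trans hja.symm)
  · by_contra hyf
    rw [Bool.not_eq_true] at hyf
    exact hadj _ _ (by simp) (rel_y hyf) (hib.trans hjb.symm)

end CLB
/-- for every integer `c ≥ 3`, the extended graph `G_{x,y}^{(c)}`
is `c`-colorable iff `x` and `y` are not disjoint, i.e. iff there is a pair
`(i, j)` with `x i j = y i j = 1`. -/
theorem ecGraph_colorable_iff_not_disjoint (k logk c : ℕ) (hk : 2 ≤ k)
    (hpow : k = 2 ^ logk) (hc : 3 ≤ c) (x y : Fin k → Fin k → Bool) :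
    (ecGraph k logk c x y).Colorable c ↔
      ∃ i j : Fin k, x i j = true ∧ y i j = true := by
  constructor
  · intro h
    obtain ⟨C⟩ := h
    have adjE : ∀ u v : ECVertex k logk c, u ≠ v → ecRel k logk c x y u v →
        C u ≠ C v := by
      intro u v hne hr
      apply C.valid
      show (SimpleGraph.fromRel (ecRel k logk c x y)).Adj u v
      rw [SimpleGraph.fromRel_adj]
      exact ⟨hne, Or.inl hr⟩
    set κ : Fin 3 → Fin c := fun m => C (Sum.inl (.c false m)) with hκ
    have hkd : ∀ m m' : Fin 3, m ≠ m' → κ m ≠ κ m' := by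
      intro m m' hmm
      exact adjE _ _ (by simp [hmm]) (CLB.rel_cc false hmm)
    have hext : ∀ (b : Bool) (m m' : Fin (c - 3)), m ≠ m' →
        C (Sum.inr (b, m)) ≠ C (Sum.inr (b, m')) := by
      intro b m m' hmm
      exact adjE _ _ (by simp [hmm]) ⟨rfl, hmm⟩
    have hextc : ∀ (b : Bool) (m : Fin (c - 3)) (j : Fin 3),
        C (Sum.inr (b, m)) ≠ κ j := by
      intro b m j
      apply adjE _ _ (by simp)
      show side (CVertex.c false j) = b ∨ (b = true ∧ ∃ m' : Fin 3,
        CVertex.c false j = CVertex.c (k := k) (logk := logk) false m')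
      cases b
      · exact Or.inl rfl
      · exact Or.inr ⟨rfl, j, rfl⟩
    have hextv : ∀ (b : Bool) (m : Fin (c - 3)) (v : CVertex k logk), side v = b →
        C (Sum.inr (b, m)) ≠ C (Sum.inl v) :=
      fun b m v hs => adjE _ _ (by simp) (Or.inl hs)
    have hconf : ∀ v : CVertex k logk, ∃ j : Fin 3, C (Sum.inl v) = κ j := by
      intro v
      have hginj : Function.Injective
          (Sum.elim (fun m : Fin (c - 3) => C (Sum.inr (side v, m))) κ) := by
        rintro (m | j) (m' | j') he <;> simp only [Sum.elim_inl, Sum.elim_inr] at he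
        · exact congrArg Sum.inl (by by_contra hmm; exact hext _ m m' hmm he)
        · exact absurd he (hextc _ m j')
        · exact absurd he.symm (hextc _ m' j)
        · exact congrArg Sum.inr (by by_contra hmm; exact hkd _ _ hmm he)
      have hcard : Fintype.card (Fin (c - 3) ⊕ Fin 3) = Fintype.card (Fin c) := by
        simp only [Fintype.card_sum, Fintype.card_fin]
        omega
      have hsurj := ((Fintype.bijective_iff_injective_and_card _).2
        ⟨hginj, hcard⟩).2
      obtain ⟨w, hw⟩ := hsurj (C (Sum.inl v))
      rcases w with m | j
      · simp only [Sum.elim_inl] at hw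
        exact absurd hw (hextv _ m v rfl)
      · simp only [Sum.elim_inr] at hw
        exact ⟨j, hw.symm⟩
    have hcb : ∀ m : Fin 3, C (Sum.inl (.c true m)) = κ m := by
      intro m
      obtain ⟨j, hj⟩ := hconf (.c true m)
      rcases eq_or_ne j m with rfl | hjm
      · exact hj
      · exfalso
        have h2 : C (Sum.inl (.c false j)) ≠ C (Sum.inl (.c true m)) :=
          adjE _ _ (by simp) (CLB.rel_cx hjm)
        exact h2 hj.symm
    choose colF hspec using hconf
    refine CLB.core hk hpow x y (fun v => (colF v).val) (fun v => (colF v).isLt)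
      ?_ ?_
    · intro u v hne hr e
      have e1 : colF u = colF v := Fin.ext e
      have e2 : C (Sum.inl u) = C (Sum.inl v) := by rw [hspec u, hspec v, e1]
      exact adjE _ _ (fun e' => hne (Sum.inl.inj e')) hr e2
    · intro s m
      have hC : C (Sum.inl (.c s m)) = κ m := by
        cases s
        · rfl
        · exact hcb m
      have e1 : κ (colF (.c s m)) = κ m := by rw [← hspec]; exact hC
      have hfm : colF (.c s m) = m := by
        by_contra hmm
        exact hkd _ _ hmm e1
      show (colF (CVertex.c s m)).val = m.val
      rw [hfm]
  · rintro ⟨i, j, hx, hy⟩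
    exact CLB.colorable_of hc i j hx hy
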